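/- Let G be a group satisfying the identity ⁅⁅a,b⁆,c⁆ = 1 for all a, b, c (i.e., G is nilpotent of class at most two), let H be a subgroup of G, and suppose that for some x, y ∈ G and some integer n > 0 both x^n and y^n lie in H. Then ⁅x,y⁆^n lies in the dominion of H in G in the variety 𝒩₂ of groups of nilpotency class at most two; that is, for every group C satisfying ⁅⁅a,b⁆,c⁆ = 1 for all a, b, c, and all group homomorphisms f, g : G → C with f|_H = g|_H, one has f(⁅x,y⁆^n) = g(⁅x,y⁆^n). -/

import Mathlib

universe u

open scoped commutatorElement

section Aux

variable {C : Type*} [Group C]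

lemma nilpTwo_comm_mul_left (hC : ∀ a b c : C, ⁅⁅a, b⁆, c⁆ = 1) (a a' b : C) : ⁅a * a', b⁆ = ⁅a, b⁆ * ⁅a', b⁆ := by
  have hcent : ∀ u v w : C, Commute ⁅u, v⁆ w := fun u v w =>
    commutatorElement_eq_one_iff_commute.mp (hC u v w)
  have h1 : ⁅a * a', b⁆ = a * ⁅a', b⁆ * a⁻¹ * ⁅a, b⁆ := by
    simp only [commutatorElement_def]; group
  rw [h1, ← (hcent a' b a).eq, mul_assoc ⁅a', b⁆ a, mul_inv_cancel, mul_one,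
    ← (hcent a' b ⁅a, b⁆).eq]

lemma nilpTwo_comm_pow_left (hC : ∀ a b c : C, ⁅⁅a, b⁆, c⁆ = 1) (a b : C) (n : ℕ) : ⁅a ^ n, b⁆ = ⁅a, b⁆ ^ n := by
  induction n with
  | zero => simp
  | succ k ih => rw [pow_succ', nilpTwo_comm_mul_left hC, ih, pow_succ']

lemma nilpTwo_comm_pow_right (hC : ∀ a b c : C, ⁅⁅a, b⁆, c⁆ = 1) (a b : C) (n : ℕ) : ⁅a, b ^ n⁆ = ⁅a, b⁆ ^ n := by
  rw [← commutatorElement_inv, nilpTwo_comm_pow_left hC, ← inv_pow, commutatorElement_inv]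

end Aux

/-- Let `G` be a group of nilpotency class at most two (i.e. satisfying the identity
`⁅⁅a,b⁆,c⁆ = 1`), `H` a subgroup of `G`, and suppose that for some `x, y ∈ G` and some
integer `n > 0` both `x^n` and `y^n` lie in `H`. Then `⁅x,y⁆^n` lies in the dominion of
`H` in `G` in the variety `𝒩₂` of groups of nilpotency class at most two: for every
group `C` satisfying `⁅⁅a,b⁆,c⁆ = 1` and all homomorphisms `f, g : G → C` agreeing on
`H`, we have `f(⁅x,y⁆^n) = g(⁅x,y⁆^n)`. -/
theorem commutator_pow_mem_dominion_nilpotentTwo {G : Type u} [Group G]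
    (hG : ∀ a b c : G, ⁅⁅a, b⁆, c⁆ = 1) (H : Subgroup G)
    (x y : G) (n : ℕ) (hn : 0 < n) (hx : x ^ n ∈ H) (hy : y ^ n ∈ H) :
    ∀ (C : Type u) [Group C], (∀ a b c : C, ⁅⁅a, b⁆, c⁆ = 1) →
      ∀ f g : G →* C, (∀ h ∈ H, f h = g h) →
        f (⁅x, y⁆ ^ n) = g (⁅x, y⁆ ^ n) := by
  intro C _ hC f g hfg
  have hxn : f (x ^ n) = g (x ^ n) := hfg _ hx
  have hyn : f (y ^ n) = g (y ^ n) := hfg _ hy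
  simp only [map_pow] at hxn hyn
  calc f (⁅x, y⁆ ^ n) = ⁅f x, f y⁆ ^ n := by rw [map_pow, map_commutatorElement]
    _ = ⁅f x, (f y) ^ n⁆ := (nilpTwo_comm_pow_right hC _ _ _).symm
    _ = ⁅f x, (g y) ^ n⁆ := by rw [hyn]
    _ = ⁅f x, g y⁆ ^ n := nilpTwo_comm_pow_right hC _ _ _
    _ = ⁅(f x) ^ n, g y⁆ := (nilpTwo_comm_pow_left hC _ _ _).symm
    _ = ⁅(g x) ^ n, g y⁆ := by rw [hxn]
    _ = ⁅g x, g y⁆ ^ n := nilpTwo_comm_pow_left hC _ _ _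
    _ = g (⁅x, y⁆ ^ n) := by rw [map_pow, map_commutatorElement]
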